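/- Let {ψ_i}_{i=1}^n be an orthonormal basis of ℝ^n with overlap at most K, let 1 ≤ p < ∞ with Hölder conjugate p', let f ∈ ℝ^n and B ≤ n. Let S ⊆ {1,…,n} with |S| = B consist of indices of the B largest values of |⟨f, ψ_k⟩| / ‖ψ_k‖_{p'}. Then Σ_{k∉S} |⟨f, ψ_k⟩|^p / ‖ψ_k‖_{p'}^p ≤ K · E^p, where E = min over B-sparse z of ‖f − Σ_i z_i ψ_i‖_p. -/

import Mathlib

open scoped ENNReal

/-- Standard inner product on `ℝ^n`. -/
noncomputable def dotp {n : ℕ} (x y : Fin n → ℝ) : ℝ := ∑ j, x j * y j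

/-- The `ℓ_p` norm on `ℝ^n`, for `p ∈ [1, ∞]` (extended-real exponent). -/
noncomputable def lpNorm {n : ℕ} (p : ℝ≥0∞) (x : Fin n → ℝ) : ℝ :=
  if p = ∞ then ⨆ j, |x j| else (∑ j, |x j| ^ p.toReal) ^ (1 / p.toReal)

/-- A vector is `B`-sparse if it has at most `B` nonzero components. -/
def Sparse {n : ℕ} (B : ℕ) (z : Fin n → ℝ) : Prop :=
  ({i | z i ≠ 0} : Set (Fin n)).ncard ≤ B

section AuxLemmas

lemma sum_le_sum_pairwise {ι : Type*} [DecidableEq ι] {c : ι → ℝ} {A B : Finset ι}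
    (hAB : A.card ≤ B.card) (hnn : ∀ b ∈ B, 0 ≤ c b)
    (hle : ∀ a ∈ A, ∀ b ∈ B, c a ≤ c b) :
    ∑ a ∈ A, c a ≤ ∑ b ∈ B, c b := by
  rcases A.eq_empty_or_nonempty with rfl | hA
  · simpa using Finset.sum_nonneg hnn
  have hB : B.Nonempty := Finset.card_pos.1 (lt_of_lt_of_le (Finset.card_pos.2 hA) hAB)
  obtain ⟨b0, hb0, hmin⟩ := B.exists_min_image c hB
  calc ∑ a ∈ A, c a ≤ ∑ _a ∈ A, c b0 :=
        Finset.sum_le_sum fun a ha => hle a ha b0 hb0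
    _ = A.card • c b0 := by rw [Finset.sum_const]
    _ ≤ B.card • c b0 := nsmul_le_nsmul_left (hnn b0 hb0) hAB
    _ ≤ ∑ b ∈ B, c b := Finset.card_nsmul_le_sum B c (c b0) fun b hb => hmin b hb

lemma sum_compl_le_sum_compl {n : ℕ} {c : Fin n → ℝ} {S T : Finset (Fin n)}
    (hTS : T.card ≤ S.card) (hnn : ∀ k, 0 ≤ c k)
    (hS : ∀ i ∈ S, ∀ k ∉ S, c k ≤ c i) :
    ∑ k ∈ Sᶜ, c k ≤ ∑ k ∈ Tᶜ, c k := by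
  have hsub : ∑ k ∈ T, c k ≤ ∑ k ∈ S, c k := by
    have h1 : (T \ S).card ≤ (S \ T).card := by
      have e1 := Finset.card_sdiff_add_card_inter T S
      have e2 := Finset.card_sdiff_add_card_inter S T
      rw [Finset.inter_comm] at e2
      omega
    have h2 : ∑ a ∈ T \ S, c a ≤ ∑ b ∈ S \ T, c b := by
      refine sum_le_sum_pairwise h1 (fun b _ => hnn b) ?_
      intro a ha b hb
      exact hS b (Finset.mem_sdiff.1 hb).1 a (Finset.mem_sdiff.1 ha).2
    calc ∑ k ∈ T, c k = ∑ k ∈ T ∩ S, c k + ∑ k ∈ T \ S, c k :=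
          (Finset.sum_inter_add_sum_sdiff T S c).symm
      _ ≤ ∑ k ∈ S ∩ T, c k + ∑ k ∈ S \ T, c k := by
          rw [Finset.inter_comm]; exact add_le_add_right h2 _
      _ = ∑ k ∈ S, c k := Finset.sum_inter_add_sum_sdiff S T c
  have e1 := Finset.sum_add_sum_compl S c
  have e2 := Finset.sum_add_sum_compl T c
  linarith

variable {n : ℕ} {p q : ℝ≥0∞}

lemma conj_facts (hp1 : 1 ≤ p) (hptop : p ≠ ∞) (hpq : 1 / p + 1 / q = 1) (hq : q ≠ ∞) :
    Real.HolderConjugate p.toReal q.toReal := by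
  have hq0 : q ≠ 0 := by
    rintro rfl
    simp at hpq
  have hp0 : p ≠ 0 := by rintro rfl; simp at hp1
  have hp1' : p ≠ 1 := by
    rintro rfl
    rw [one_div, one_div, inv_one] at hpq
    have h0 : (1:ℝ≥0∞) + q⁻¹ = 1 + 0 := by simpa using hpq
    exact hq (ENNReal.inv_eq_zero.1 ((ENNReal.add_right_inj (by simp)).1 h0))
  refine Real.holderConjugate_iff.mpr ⟨?_, ?_⟩
  · rw [show (1:ℝ) = (1:ℝ≥0∞).toReal by simp]
    exact (ENNReal.toReal_lt_toReal (by simp) hptop).2 (lt_of_le_of_ne hp1 (Ne.symm hp1'))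
  · rw [← ENNReal.toReal_inv, ← ENNReal.toReal_inv,
      ← ENNReal.toReal_add (by simpa using hp0) (by simpa using hq0)]
    rw [one_div, one_div] at hpq
    rw [hpq, ENNReal.toReal_one]

lemma q_top_p_one (hpq : 1 / p + 1 / q = 1) (hq : q = ∞) : p = 1 := by
  subst hq
  simp only [one_div, ENNReal.inv_top, add_zero] at hpq
  simpa using congrArg Inv.inv hpq

lemma holder_step (g w : Fin n → ℝ) (hp1 : 1 ≤ p) (hptop : p ≠ ∞)
    (hpq : 1 / p + 1 / q = 1) :
    |∑ j, g j * w j| ≤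
      (∑ j ∈ Finset.univ.filter (fun j => w j ≠ 0), |g j| ^ p.toReal) ^ (1 / p.toReal)
        * lpNorm q w := by
  by_cases hq : q = ∞
  · have hp : p = 1 := q_top_p_one hpq hq
    subst hp; subst hq
    have hbdd : BddAbove (Set.range fun j => |w j|) :=
      (Set.finite_range _).bddAbove
    have key : |∑ j, g j * w j| ≤
        (∑ j ∈ Finset.univ.filter (fun j => ¬ w j = 0), |g j|) * ⨆ j', |w j'| :=
      calc |∑ j, g j * w j| ≤ ∑ j, |g j * w j| := Finset.abs_sum_le_sum_abs _ _
      _ = ∑ j ∈ Finset.univ.filter (fun j => ¬ w j = 0), |g j * w j| := by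
          refine (Finset.sum_filter_of_ne ?_).symm
          intro x _ hx h0
          simp [h0] at hx
      _ ≤ ∑ j ∈ Finset.univ.filter (fun j => ¬ w j = 0), |g j| * ⨆ j', |w j'| := by
          refine Finset.sum_le_sum fun j _ => ?_
          rw [abs_mul]
          exact mul_le_mul_of_nonneg_left (le_ciSup (f := fun j' => |w j'|) hbdd j) (abs_nonneg _)
      _ = (∑ j ∈ Finset.univ.filter (fun j => ¬ w j = 0), |g j|) * ⨆ j', |w j'| := by
          rw [Finset.sum_mul]
    simpa [lpNorm, ENNReal.toReal_one] using key
  · have hc : Real.HolderConjugate p.toReal q.toReal := conj_facts hp1 hptop hpq hq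
    have hs0 : q.toReal ≠ 0 := hc.symm.ne_zero
    rw [lpNorm, if_neg hq]
    have hw : ∑ j, |w j| ^ q.toReal
        = ∑ j ∈ Finset.univ.filter (fun j => w j ≠ 0), |w j| ^ q.toReal := by
      refine (Finset.sum_filter_of_ne ?_).symm
      intro x _ hx
      intro h0
      simp [h0, Real.zero_rpow hs0] at hx
    rw [hw]
    set T := Finset.univ.filter (fun j => w j ≠ 0) with hT
    have hsum : ∀ u : Fin n → ℝ, ∑ j, u j * w j = ∑ j ∈ T, u j * w j := by
      intro u
      refine (Finset.sum_filter_of_ne ?_).symm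
      intro x _ hx h0
      simp [h0] at hx
    have H1 := Real.inner_le_Lp_mul_Lq T g w hc
    have H2 := Real.inner_le_Lp_mul_Lq T (fun j => -g j) w hc
    simp only [abs_neg, neg_mul] at H2
    rw [Finset.sum_neg_distrib] at H2
    rw [hsum g]
    exact abs_le.2 ⟨by linarith, H1⟩

lemma lpNorm_pos {w : Fin n → ℝ} (hpq : 1 / p + 1 / q = 1) {j0 : Fin n}
    (hj0 : w j0 ≠ 0) : 0 < lpNorm q w := by
  by_cases hq : q = ∞
  · subst hq
    rw [lpNorm, if_pos rfl]
    exact lt_of_lt_of_le (abs_pos.2 hj0)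
      (le_ciSup (f := fun j => |w j|) ((Set.finite_range _).bddAbove) j0)
  · have hq0 : q ≠ 0 := by rintro rfl; simp at hpq
    have hs : 0 < q.toReal := ENNReal.toReal_pos hq0 hq
    rw [lpNorm, if_neg hq]
    refine Real.rpow_pos_of_pos ?_ _
    refine Finset.sum_pos' (fun j _ => Real.rpow_nonneg (abs_nonneg _) _) ?_
    exact ⟨j0, Finset.mem_univ _, Real.rpow_pos_of_pos (abs_pos.2 hj0) _⟩

end AuxLemmas

theorem stmt6 {n B K : ℕ} (ψ : Fin n → Fin n → ℝ)
    (horth : ∀ i k, dotp (ψ i) (ψ k) = if i = k then (1 : ℝ) else 0)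
    (hK : ∀ j : Fin n, ({i | ψ i j ≠ 0} : Set (Fin n)).ncard ≤ K)
    (p q : ℝ≥0∞) (hp1 : 1 ≤ p) (hptop : p ≠ ∞) (hpq : 1 / p + 1 / q = 1)
    (f : Fin n → ℝ) (hB : B ≤ n)
    (S : Finset (Fin n)) (hcard : S.card = B)
    (hS : ∀ i ∈ S, ∀ k ∉ S,
      |dotp f (ψ k)| / lpNorm q (ψ k) ≤ |dotp f (ψ i)| / lpNorm q (ψ i)) :
    ∑ k ∈ Sᶜ, |dotp f (ψ k)| ^ p.toReal / lpNorm q (ψ k) ^ p.toReal ≤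
      (K : ℝ) *
        (sInf {e : ℝ | ∃ z : Fin n → ℝ, Sparse B z ∧
          e = lpNorm p (fun j => f j - ∑ i, z i * ψ i j)}) ^ p.toReal := by
  classical
  set r := p.toReal with hr
  have hr1 : (1:ℝ) ≤ r := by
    rw [show (1:ℝ) = (1:ℝ≥0∞).toReal by simp]
    exact (ENNReal.toReal_le_toReal (by simp) hptop).2 hp1
  have hr0 : (0:ℝ) < r := lt_of_lt_of_le one_pos hr1
  have hrne : r ≠ 0 := ne_of_gt hr0
  set setE := {e : ℝ | ∃ z : Fin n → ℝ, Sparse B z ∧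
      e = lpNorm p (fun j => f j - ∑ i, z i * ψ i j)} with hsetE
  -- elements of setE are nonneg
  have helem_nonneg : ∀ e ∈ setE, 0 ≤ e := by
    rintro e ⟨z, _, rfl⟩
    rw [lpNorm, if_neg hptop]
    exact Real.rpow_nonneg (Finset.sum_nonneg fun j _ => Real.rpow_nonneg (abs_nonneg _) _) _
  have hne : setE.Nonempty := by
    refine ⟨lpNorm p (fun j => f j - ∑ i, (0:ℝ) * ψ i j), fun _ => 0, ?_, rfl⟩
    simp [Sparse]
  have hInf_nonneg : 0 ≤ sInf setE := Real.sInf_nonneg (fun e he => helem_nonneg e he)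
  -- the LHS summand
  set c : Fin n → ℝ := fun k => |dotp f (ψ k)| ^ r / lpNorm q (ψ k) ^ r with hc
  rcases Nat.eq_zero_or_pos n with hn | hn
  · subst hn
    have : ∑ k ∈ Sᶜ, c k = 0 := by
      apply Finset.sum_eq_zero
      intro k _
      exact absurd k.2 (by omega)
    rw [this]
    exact mul_nonneg (by positivity) (Real.rpow_nonneg hInf_nonneg _)
  -- n > 0
  -- each ψ k is nonzero
  have hne_psi : ∀ k, ∃ j, ψ k j ≠ 0 := by
    intro k
    by_contra h
    push_neg at h
    have := horth k k
    simp only [if_pos rfl, dotp] at this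
    rw [Finset.sum_eq_zero (fun j _ => by rw [h j, mul_zero])] at this
    exact one_ne_zero this.symm
  have hN : ∀ k, 0 < lpNorm q (ψ k) := by
    intro k
    obtain ⟨j, hj⟩ := hne_psi k
    exact lpNorm_pos hpq hj
  have hc_nonneg : ∀ k, 0 ≤ c k := fun k =>
    div_nonneg (Real.rpow_nonneg (abs_nonneg _) _) (Real.rpow_nonneg (hN k).le _)
  -- K > 0
  have hKpos : 0 < K := by
    obtain ⟨j, hj⟩ := hne_psi ⟨0, hn⟩
    have h1 : 0 < ({i | ψ i j ≠ 0} : Set (Fin n)).ncard := by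
      rw [Set.ncard_pos (Set.toFinite _)]
      exact ⟨⟨0, hn⟩, hj⟩
    exact lt_of_lt_of_le h1 (hK j)
  -- overlap count
  have hKj : ∀ j, (Finset.univ.filter (fun i => ψ i j ≠ 0)).card ≤ K := by
    intro j
    have := hK j
    rwa [Set.ncard_eq_toFinset_card', Set.toFinset_setOf] at this
  -- double counting
  have overlap : ∀ (A : Finset (Fin n)) (h : Fin n → ℝ), (∀ j, 0 ≤ h j) →
      ∑ k ∈ A, ∑ j ∈ Finset.univ.filter (fun j => ψ k j ≠ 0), h j ≤ (K:ℝ) * ∑ j, h j := by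
    intro A h hh
    have e1 : ∀ k, ∑ j ∈ Finset.univ.filter (fun j => ψ k j ≠ 0), h j
        = ∑ j, if ψ k j ≠ 0 then h j else 0 := fun k => Finset.sum_filter _ _
    rw [Finset.sum_congr rfl fun k _ => e1 k, Finset.sum_comm]
    calc ∑ j, ∑ k ∈ A, (if ψ k j ≠ 0 then h j else 0)
        = ∑ j : Fin n, ((A.filter (fun k => ψ k j ≠ 0)).card : ℝ) * h j := by
          refine Finset.sum_congr rfl fun j _ => ?_
          rw [Finset.sum_ite, Finset.sum_const, Finset.sum_const_zero, add_zero,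
            nsmul_eq_mul]
      _ ≤ ∑ j : Fin n, (K:ℝ) * h j := by
          refine Finset.sum_le_sum fun j _ => ?_
          refine mul_le_mul_of_nonneg_right ?_ (hh j)
          exact_mod_cast le_trans
            (Nat.cast_le.2 (Finset.card_le_card
              (Finset.filter_subset_filter _ (Finset.subset_univ A)))) (Nat.cast_le.2 (hKj j))
      _ = (K:ℝ) * ∑ j, h j := by rw [Finset.mul_sum]
  -- key inequality for each sparse z
  have key : ∀ e ∈ setE, ∑ k ∈ Sᶜ, c k ≤ (K:ℝ) * e ^ r := by
    rintro e ⟨z, hz, rfl⟩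
    set g : Fin n → ℝ := fun j => f j - ∑ i, z i * ψ i j with hg
    have hgpow : lpNorm p g ^ r = ∑ j, |g j| ^ r := by
      rw [lpNorm, if_neg hptop, one_div, Real.rpow_inv_rpow
        (Finset.sum_nonneg fun j _ => Real.rpow_nonneg (abs_nonneg _) _) hrne]
    rw [hgpow]
    set T : Finset (Fin n) := Finset.univ.filter (fun i => z i ≠ 0) with hT
    have hTcard : T.card ≤ S.card := by
      rw [hcard]
      have := hz
      rwa [Sparse, Set.ncard_eq_toFinset_card', Set.toFinset_setOf] at this
    -- monotonicity hypothesis for c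
    have hmono : ∀ i ∈ S, ∀ k ∉ S, c k ≤ c i := by
      intro i hi k hk
      have hck : c k = (|dotp f (ψ k)| / lpNorm q (ψ k)) ^ r :=
        (Real.div_rpow (abs_nonneg _) (hN k).le _).symm
      have hci : c i = (|dotp f (ψ i)| / lpNorm q (ψ i)) ^ r :=
        (Real.div_rpow (abs_nonneg _) (hN i).le _).symm
      rw [hck, hci]
      exact Real.rpow_le_rpow (div_nonneg (abs_nonneg _) (hN k).le)
        (hS i hi k hk) hr0.le
    have step1 : ∑ k ∈ Sᶜ, c k ≤ ∑ k ∈ Tᶜ, c k :=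
      sum_compl_le_sum_compl hTcard hc_nonneg hmono
    -- dotp identity
    have hdot : ∀ k, dotp g (ψ k) = dotp f (ψ k) - z k := by
      intro k
      have h2 : ∀ i : Fin n, ∑ j, z i * ψ i j * ψ k j = z i * dotp (ψ i) (ψ k) := by
        intro i
        rw [dotp, Finset.mul_sum]
        exact Finset.sum_congr rfl fun j _ => by ring
      simp only [dotp, hg, sub_mul, Finset.sum_sub_distrib, Finset.sum_mul]
      congr 1
      rw [Finset.sum_comm]
      rw [Finset.sum_congr rfl fun i _ => h2 i]
      simp [horth]
    have step2 : ∀ k ∈ Tᶜ, c k ≤ ∑ j ∈ Finset.univ.filter (fun j => ψ k j ≠ 0), |g j| ^ r := by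
      intro k hk
      have hzk : z k = 0 := by
        have := Finset.mem_compl.1 hk
        simpa [hT] using this
      have hfg : dotp f (ψ k) = dotp g (ψ k) := by rw [hdot k, hzk, sub_zero]
      set A := ∑ j ∈ Finset.univ.filter (fun j => ψ k j ≠ 0), |g j| ^ r with hA
      have hAnn : 0 ≤ A :=
        Finset.sum_nonneg fun j _ => Real.rpow_nonneg (abs_nonneg _) _
      have hhold : |dotp g (ψ k)| ≤ A ^ (1/r) * lpNorm q (ψ k) :=
        holder_step g (ψ k) hp1 hptop hpq
      have hpow : |dotp g (ψ k)| ^ r ≤ A * lpNorm q (ψ k) ^ r := by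
        have h1 : |dotp g (ψ k)| ^ r ≤ (A ^ (1/r) * lpNorm q (ψ k)) ^ r :=
          Real.rpow_le_rpow (abs_nonneg _) hhold hr0.le
        rwa [Real.mul_rpow (Real.rpow_nonneg hAnn _) (hN k).le, one_div,
          Real.rpow_inv_rpow hAnn hrne] at h1
      show |dotp f (ψ k)| ^ r / lpNorm q (ψ k) ^ r ≤ A
      rw [hfg, div_le_iff₀ (Real.rpow_pos_of_pos (hN k) _)]
      exact hpow
    calc ∑ k ∈ Sᶜ, c k ≤ ∑ k ∈ Tᶜ, c k := step1
      _ ≤ ∑ k ∈ Tᶜ, ∑ j ∈ Finset.univ.filter (fun j => ψ k j ≠ 0), |g j| ^ r :=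
          Finset.sum_le_sum step2
      _ ≤ (K:ℝ) * ∑ j, |g j| ^ r :=
          overlap Tᶜ (fun j => |g j| ^ r) (fun j => Real.rpow_nonneg (abs_nonneg _) _)
  -- conclude
  have hLHS : 0 ≤ ∑ k ∈ Sᶜ, c k := Finset.sum_nonneg fun k _ => hc_nonneg k
  set L := ∑ k ∈ Sᶜ, c k with hL
  have hKR : (0:ℝ) < K := by exact_mod_cast hKpos
  have hlow : ∀ e ∈ setE, (L / K) ^ r⁻¹ ≤ e := by
    intro e he
    have h1 : L ≤ (K:ℝ) * e ^ r := key e he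
    have h2 : L / K ≤ e ^ r := (div_le_iff₀' hKR).2 h1
    have h3 : (L/K) ^ r⁻¹ ≤ (e ^ r) ^ r⁻¹ :=
      Real.rpow_le_rpow (div_nonneg hLHS hKR.le) h2 (by positivity)
    rwa [Real.rpow_rpow_inv (helem_nonneg e he) hrne] at h3
  have hInf : (L / K) ^ r⁻¹ ≤ sInf setE := le_csInf hne hlow
  have h4 : ((L / K) ^ r⁻¹) ^ r ≤ (sInf setE) ^ r :=
    Real.rpow_le_rpow (Real.rpow_nonneg (div_nonneg hLHS hKR.le) _) hInf hr0.le
  rw [Real.rpow_inv_rpow (div_nonneg hLHS hKR.le) hrne] at h4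
  calc L = (K:ℝ) * (L / K) := by field_simp
    _ ≤ (K:ℝ) * (sInf setE) ^ r := mul_le_mul_of_nonneg_left h4 hKR.le
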